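/- arXiv:1905.04406 — 3 statements merged into one kernel-verified Lean document; each statement's English description precedes it below -/
import Mathlib

section
/- Let K be a totally real number field of degree f, Γ(I) ⊂ SL(n, O_K) the set of matrices congruent to the identity mod a prime ideal I, and suppose every A ∈ Γ(I) satisfies |tr(A^σ)| ≤ n for all non-identity embeddings σ. Then for A ∈ Γ(I) with tr A ≠ n, one has |tr A| ≥ N(I)/(2n)^{f-1} - n. -/
open NumberField

/-- Let `K` be a totally real number field of degree `f`, `I ⊂ 𝓞 K` a
nonzero prime ideal, and `A ∈ SL(n, 𝓞 K)` congruent to the identity mod `I` (i.e.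
`A ∈ Γ(I)`), with `|tr(A^σ)| ≤ n` for all real embeddings `σ ≠ σ₀`. If `tr A ≠ n`,
then `|tr A| ≥ N(I)/(2n)^(f-1) - n`. -/
theorem trace_lower_bound_congruence (K : Type) [Field K] [NumberField K]
    -- K is totally real: every complex embedding takes real values
    (htot : ∀ φ : K →+* ℂ, ∀ x : K, (φ x).im = 0)
    (σ₀ : K →+* ℝ)
    (I : Ideal (𝓞 K)) (hI : I.IsPrime) (hIbot : I ≠ ⊥)
    (n : ℕ)
    (A : Matrix (Fin n) (Fin n) (𝓞 K)) (hdet : A.det = 1)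
    -- A ≡ Id mod I
    (hcong : ∀ i j, A i j - (1 : Matrix (Fin n) (Fin n) (𝓞 K)) i j ∈ I)
    -- compactness bound on Galois conjugates
    (hcpt : ∀ σ : K →+* ℝ, σ ≠ σ₀ →
      |(A.map (fun x => σ (algebraMap (𝓞 K) K x))).trace| ≤ n)
    (htr : A.trace ≠ (n : 𝓞 K)) :
    (Ideal.absNorm I : ℝ) / (2 * n : ℝ) ^ (Module.finrank ℚ K - 1) - n ≤
      |σ₀ (algebraMap (𝓞 K) K A.trace)| := by
  classical
  rcases Nat.eq_zero_or_pos n with hn0 | hn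
  · subst hn0; simp [Matrix.trace] at htr
  -- equivalence of real and complex embeddings
  let e : (K →+* ℝ) ≃ (K →+* ℂ) :=
  { toFun := fun σ => Complex.ofRealHom.comp σ
    invFun := fun φ =>
      { toFun := fun x => (φ x).re
        map_one' := by simp
        map_mul' := fun x y => by simp [Complex.mul_re, htot φ]
        map_zero' := by simp
        map_add' := fun x y => by simp }
    left_inv := fun σ => by ext x; simp
    right_inv := fun φ => by
      ext x
      apply Complex.ext <;> simp [htot φ] }
  have hcard : Fintype.card (K →+* ℝ) = Module.finrank ℚ K := by
    rw [Fintype.card_congr e, NumberField.Embeddings.card]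
  -- product formula over real embeddings
  have hprod : ∀ x : K, (∏ σ : K →+* ℝ, |σ x|) = |(Algebra.norm ℚ x : ℝ)| := by
    intro x
    have h1 : algebraMap ℚ ℂ (Algebra.norm ℚ x) = ∏ τ : K →ₐ[ℚ] ℂ, τ x :=
      Algebra.norm_eq_prod_embeddings ℚ ℂ x
    have h2 := congrArg (fun z : ℂ => ‖z‖) h1
    rw [norm_prod] at h2
    rw [← Fintype.prod_equiv (e.trans (RingHom.equivRatAlgHom K ℂ))
        (fun σ : K →+* ℝ => |σ x|) (fun τ : K →ₐ[ℚ] ℂ => ‖τ x‖)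
        (fun σ => by
          show |σ x| = ‖Complex.ofRealHom (σ x)‖
          simp)] at h2
    rw [← h2]
    rw [show (algebraMap ℚ ℂ) (Algebra.norm ℚ x) = ((Algebra.norm ℚ x : ℚ) : ℂ) from
      eq_ratCast _ _]
    rw [← Complex.ofReal_ratCast, Complex.norm_real, Real.norm_eq_abs]
  set c : 𝓞 K := A.trace - n with hc
  have hcI : c ∈ I := by
    have hceq : c = ∑ i, (A i i - (1 : Matrix (Fin n) (Fin n) (𝓞 K)) i i) := by
      simp [hc, Matrix.trace, Matrix.diag, Finset.sum_sub_distrib, Matrix.one_apply_eq]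
    rw [hceq]
    exact Ideal.sum_mem _ fun i _ => hcong i i
  have hc0 : c ≠ 0 := sub_ne_zero.mpr htr
  have hcK0 : (algebraMap (𝓞 K) K c) ≠ 0 := by
    simpa using hc0
  -- norm bound from ideal membership
  have hNdvd : (Ideal.absNorm I : ℤ) ∣ Algebra.norm ℤ c := Ideal.absNorm_dvd_norm_of_mem hcI
  have hNQ : ((Algebra.norm ℤ c : ℚ)) = Algebra.norm ℚ (algebraMap (𝓞 K) K c) :=
    Algebra.coe_norm_int c
  have hN0 : Algebra.norm ℤ c ≠ 0 := by
    intro h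
    have : Algebra.norm ℚ (algebraMap (𝓞 K) K c) = 0 := by rw [← hNQ, h]; norm_num
    exact hcK0 ((Algebra.norm_eq_zero_iff).mp this)
  have hNI : (Ideal.absNorm I : ℝ) ≤ |(Algebra.norm ℚ (algebraMap (𝓞 K) K c) : ℝ)| := by
    have h1 : (Ideal.absNorm I : ℤ) ≤ |Algebra.norm ℤ c| :=
      Int.le_of_dvd (abs_pos.mpr hN0) ((dvd_abs _ _).mpr hNdvd)
    have h2 : |(Algebra.norm ℚ (algebraMap (𝓞 K) K c) : ℝ)| = (|Algebra.norm ℤ c| : ℤ) := by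
      rw [← hNQ, Int.cast_abs]; push_cast; ring
    rw [h2]; exact_mod_cast h1
  -- trace of mapped matrix
  have hmap : ∀ σ : K →+* ℝ, (A.map (fun x => σ (algebraMap (𝓞 K) K x))).trace
      = σ (algebraMap (𝓞 K) K A.trace) := by
    intro σ
    simp [Matrix.trace, Matrix.diag, Matrix.map_apply, map_sum]
  have hcval : ∀ σ : K →+* ℝ, σ (algebraMap (𝓞 K) K c)
      = σ (algebraMap (𝓞 K) K A.trace) - n := by
    intro σ
    simp [hc, map_sub, map_natCast]
  have hbound : ∀ σ : K →+* ℝ, σ ≠ σ₀ → |σ (algebraMap (𝓞 K) K c)| ≤ 2 * n := by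
    intro σ hσ
    have h1 := hcpt σ hσ
    rw [hmap σ] at h1
    rw [hcval σ]
    calc |σ (algebraMap (𝓞 K) K A.trace) - (n : ℝ)|
        ≤ |σ (algebraMap (𝓞 K) K A.trace)| + |(n : ℝ)| := abs_sub _ _
      _ ≤ n + n := by
          apply add_le_add h1
          simp
      _ = 2 * n := by ring
  -- main estimate
  have hpow : (0 : ℝ) < (2 * n : ℝ) ^ (Module.finrank ℚ K - 1) := by
    apply pow_pos; positivity
  have key : (Ideal.absNorm I : ℝ) ≤
      |σ₀ (algebraMap (𝓞 K) K c)| * (2 * n : ℝ) ^ (Module.finrank ℚ K - 1) := by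
    calc (Ideal.absNorm I : ℝ) ≤ |(Algebra.norm ℚ (algebraMap (𝓞 K) K c) : ℝ)| := hNI
      _ = ∏ σ : K →+* ℝ, |σ (algebraMap (𝓞 K) K c)| := (hprod _).symm
      _ = |σ₀ (algebraMap (𝓞 K) K c)| *
            ∏ σ ∈ Finset.univ.erase σ₀, |σ (algebraMap (𝓞 K) K c)| :=
          (Finset.mul_prod_erase _ _ (Finset.mem_univ σ₀)).symm
      _ ≤ |σ₀ (algebraMap (𝓞 K) K c)| * (2 * n : ℝ) ^ (Module.finrank ℚ K - 1) := by
          apply mul_le_mul_of_nonneg_left _ (abs_nonneg _)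
          have hcarde : (Finset.univ.erase σ₀).card = Module.finrank ℚ K - 1 := by
            rw [Finset.card_erase_of_mem (Finset.mem_univ σ₀), Finset.card_univ, hcard]
          calc ∏ σ ∈ Finset.univ.erase σ₀, |σ (algebraMap (𝓞 K) K c)|
              ≤ ∏ _σ ∈ Finset.univ.erase σ₀, (2 * n : ℝ) :=
                Finset.prod_le_prod (fun _ _ => abs_nonneg _)
                  (fun σ hσ => hbound σ (Finset.ne_of_mem_erase hσ))
            _ = (2 * n : ℝ) ^ (Module.finrank ℚ K - 1) := by
                rw [Finset.prod_const, hcarde]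
  have hσ₀ : (Ideal.absNorm I : ℝ) / (2 * n : ℝ) ^ (Module.finrank ℚ K - 1)
      ≤ |σ₀ (algebraMap (𝓞 K) K c)| := by
    rw [div_le_iff₀ hpow]
    exact key
  have hfin : |σ₀ (algebraMap (𝓞 K) K c)| ≤ |σ₀ (algebraMap (𝓞 K) K A.trace)| + n := by
    rw [hcval σ₀]
    calc |σ₀ (algebraMap (𝓞 K) K A.trace) - (n : ℝ)|
        ≤ |σ₀ (algebraMap (𝓞 K) K A.trace)| + |(n : ℝ)| := abs_sub _ _
      _ = |σ₀ (algebraMap (𝓞 K) K A.trace)| + n := by simp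
  linarith
end

section
/- The set of complex Salem numbers of degree at most d over ℚ, for any fixed d, attains a least element in absolute value strictly greater than 1 (equivalently, there is ε > 0 with |λ| ≥ 1 + ε for all such λ). -/
open Polynomial

/-- A complex Salem number: `λ` with `|λ| > 1` which is a root of a monic integer
polynomial all of whose roots other than `λ, conj λ, λ⁻¹, conj(λ)⁻¹` lie on the
unit circle. -/
def IsComplexSalem (lam : ℂ) : Prop :=
  1 < ‖lam‖ ∧
    ∃ p : Polynomial ℤ, p.Monic ∧ Polynomial.aeval lam p = 0 ∧
      ∀ z : ℂ, Polynomial.aeval z p = 0 →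
        z = lam ∨ z = starRingEnd ℂ lam ∨ z = lam⁻¹ ∨ z = (starRingEnd ℂ lam)⁻¹ ∨
          ‖z‖ = 1

lemma salem_isIntegral {lam : ℂ} (h : IsComplexSalem lam) : IsIntegral ℤ lam := by
  obtain ⟨-, p, hm, hv, -⟩ := h
  exact ⟨p, hm, by rwa [← Polynomial.aeval_def]⟩

/-- All complex roots of the minimal polynomial of a Salem number with `|λ| ≤ 2`
have norm at most `2`. -/
lemma salem_roots_le {lam : ℂ} (h : IsComplexSalem lam) (h2 : ‖lam‖ ≤ 2) :
    ∀ z ∈ ((minpoly ℚ lam).map (algebraMap ℚ ℂ)).roots, ‖z‖ ≤ 2 := by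
  obtain ⟨hgt, p, hm, hv, hroots⟩ := h
  intro z hz
  have hzr : Polynomial.aeval z (minpoly ℚ lam) = 0 := by
    rw [Polynomial.aeval_def, ← Polynomial.eval_map]
    exact (Polynomial.mem_roots (Polynomial.map_monic_ne_zero
      (minpoly.monic ((salem_isIntegral ⟨hgt, p, hm, hv, hroots⟩).tower_top (A := ℚ))))).1 hz
  have hdvd : minpoly ℚ lam ∣ p.map (algebraMap ℤ ℚ) := by
    apply minpoly.dvd
    rw [Polynomial.aeval_map_algebraMap]
    exact hv
  have hzp : Polynomial.aeval z p = 0 := by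
    obtain ⟨q, hq⟩ := hdvd
    have : Polynomial.aeval z (p.map (algebraMap ℤ ℚ)) = 0 := by
      rw [hq, map_mul, hzr, zero_mul]
    rwa [Polynomial.aeval_map_algebraMap] at this
  have habs : ‖z‖ ≤ 2 := by
    rcases hroots z hzp with rfl | rfl | rfl | rfl | h1
    · exact h2
    · simpa using h2
    · rw [norm_inv]
      have : (1:ℝ) ≤ ‖lam‖ := le_of_lt hgt
      calc (‖lam‖)⁻¹ ≤ 1 := inv_le_one_of_one_le₀ this
        _ ≤ 2 := by norm_num
    · rw [norm_inv]
      simp only [Complex.norm_conj]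
      have : (1:ℝ) ≤ ‖lam‖ := le_of_lt hgt
      calc (‖lam‖)⁻¹ ≤ 1 := inv_le_one_of_one_le₀ this
        _ ≤ 2 := by norm_num
    · rw [h1]; norm_num
  simpa using habs

lemma salem_finite (d : ℕ) :
    {lam : ℂ | IsComplexSalem lam ∧ (minpoly ℚ lam).natDegree ≤ d ∧
      ‖lam‖ ≤ 2}.Finite := by
  classical
  set C := Nat.ceil ((2:ℝ) ^ d * d.choose (d / 2)) with hC
  have hfin := Polynomial.bUnion_roots_finite (algebraMap ℤ ℂ) d
    (Set.finite_Icc (-(C:ℤ)) C)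
  refine hfin.subset fun x hx => ?_
  obtain ⟨hs, hdeg, habs⟩ := hx
  have hint : IsIntegral ℤ x := salem_isIntegral hs
  have hintQ : IsIntegral ℚ x := hint.tower_top
  have h_map : minpoly ℚ x = (minpoly ℤ x).map (algebraMap ℤ ℚ) :=
    minpoly.isIntegrallyClosed_eq_field_fractions' ℚ hint
  simp_rw [Set.mem_iUnion]
  refine ⟨minpoly ℤ x, ⟨?_, fun i => ?_⟩, ?_⟩
  · rw [← (minpoly.monic hint).natDegree_map (algebraMap ℤ ℚ), ← h_map]
    exact hdeg
  · rw [Set.mem_Icc, ← abs_le, ← @Int.cast_le ℝ]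
    have hb := Polynomial.coeff_bdd_of_roots_le (algebraMap ℚ ℂ) (minpoly.monic hintQ)
      (IsAlgClosed.splits _) hdeg (salem_roots_le hs habs) i
    have h21 : max (2:ℝ) 1 = 2 := by norm_num
    rw [h21] at hb
    refine le_trans ?_ ((hb.trans (Nat.le_ceil _)))
    rw [h_map, Polynomial.coeff_map, Polynomial.coeff_map]
    simp [Int.cast_abs]
  · exact Multiset.mem_toFinset.2 <| (Polynomial.mem_roots
      (Polynomial.map_monic_ne_zero (minpoly.monic hint))).2 (by
      rw [Polynomial.IsRoot.def, Polynomial.eval_map, ← Polynomial.aeval_def]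
      exact minpoly.aeval ℤ x)

/-- For any fixed `d`, the complex Salem numbers of degree at most `d`
over `ℚ` are uniformly bounded away from `1` in absolute value: there is `ε > 0`
with `|λ| ≥ 1 + ε` for all such `λ`. -/
theorem complexSalem_bounded_away_from_one (d : ℕ) :
    ∃ ε : ℝ, 0 < ε ∧ ∀ lam : ℂ, IsComplexSalem lam →
      (minpoly ℚ lam).natDegree ≤ d → 1 + ε ≤ ‖lam‖ := by
  classical
  have hfin := salem_finite d
  set F := hfin.toFinset with hF
  by_cases hne : F.Nonempty
  · set G := F.image (fun l => ‖l‖ - 1) with hG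
    have hGne : G.Nonempty := hne.image _
    refine ⟨min 1 (G.min' hGne), lt_min one_pos ?_, ?_⟩
    · rw [Finset.lt_min'_iff]
      intro y hy
      obtain ⟨l, hl, rfl⟩ := Finset.mem_image.1 hy
      have : IsComplexSalem l := (hfin.mem_toFinset.1 hl).1
      linarith [this.1]
    · intro lam hs hdeg
      by_cases h2 : ‖lam‖ ≤ 2
      · have hmem : lam ∈ F := hfin.mem_toFinset.2 ⟨hs, hdeg, h2⟩
        have hGm : ‖lam‖ - 1 ∈ G := Finset.mem_image_of_mem _ hmem
        have := G.min'_le _ hGm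
        have hmin : min 1 (G.min' hGne) ≤ ‖lam‖ - 1 :=
          le_trans (min_le_right _ _) this
        linarith
      · push_neg at h2
        have : min 1 (G.min' hGne) ≤ 1 := min_le_left _ _
        linarith
  · refine ⟨1, one_pos, fun lam hs hdeg => ?_⟩
    by_cases h2 : ‖lam‖ ≤ 2
    · exact absurd ⟨lam, hfin.mem_toFinset.2 ⟨hs, hdeg, h2⟩⟩ hne
    · push_neg at h2; linarith
end

section
/- Let p₁(z) be a monic irreducible polynomial over the ring of integers of a number field K ⊂ ℝ (viewed inside ℂ via embeddings of a CM extension), having a root μ with |μ| ≠ 1 and such that the constant term of p₁ equals w·μ for some complex number w with |w| = 1. If the constant term lies in O_K and there exists a real embedding σ ≠ id of K under which all roots of the corresponding conjugate polynomial lie on the unit circle, then |σ(constant term)| = 1 forces a contradiction; i.e., the constant term cannot lie in O_K unless |μ| = 1. -/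
open Polynomial

/-- Let `p₁` be a monic irreducible polynomial over a (real-embedded)
number field `K`, with algebraic-integer coefficients, having a root `μ` with
`|μ| ≠ 1`, whose constant term equals `w·μ` with `|w| = 1`. If there is a real
embedding `σ ≠ σ₀` under which all roots of the conjugate polynomial `p₁^σ` lie on
the unit circle, we reach a contradiction: the constant term cannot lie in `𝓞 K`
unless `|μ| = 1`. -/
theorem no_integral_constant_term (K : Type) [Field K] [NumberField K]
    (σ₀ σ : K →+* ℝ) (hσ : σ ≠ σ₀)
    (p₁ : Polynomial K) (hmonic : p₁.Monic) (hirr : Irreducible p₁)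
    -- the coefficients of p₁ lie in the ring of integers of K
    (hint : ∀ k, IsIntegral ℤ (p₁.coeff k))
    (μ w : ℂ) (hμ : ‖μ‖ ≠ 1) (hw : ‖w‖ = 1)
    (hroot : (p₁.map (Complex.ofRealHom.comp σ₀)).IsRoot μ)
    (hconst : (Complex.ofRealHom.comp σ₀) (p₁.coeff 0) = w * μ)
    (hunit : ∀ z : ℂ, (p₁.map (Complex.ofRealHom.comp σ)).IsRoot z →
      ‖z‖ = 1) :
    False := by
  set P : Polynomial ℂ := p₁.map (Complex.ofRealHom.comp σ) with hP
  have hPmonic : P.Monic := hmonic.map _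
  have hsplits : P.Splits := IsAlgClosed.splits P
  have hcoeff : P.coeff 0 = (-1) ^ P.natDegree * P.roots.prod :=
    hsplits.coeff_zero_eq_prod_roots_of_monic hPmonic
  have habs : ‖P.coeff 0‖ = 1 := by
    rw [hcoeff]
    rw [norm_mul, norm_pow]
    simp only [norm_neg, map_one, norm_one, one_pow, one_mul]
    rw [show ‖P.roots.prod‖ = (P.roots.map (‖·‖)).prod from map_multiset_prod (normHom : ℂ →*₀ ℝ) _]
    rw [Multiset.prod_eq_one]
    intro x hx
    rw [Multiset.mem_map] at hx
    obtain ⟨a, ha, rfl⟩ := hx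
    exact hunit a ((mem_roots'.mp ha).2)
  have hc0 : P.coeff 0 = ((σ (p₁.coeff 0) : ℝ) : ℂ) := by
    simp [hP, coeff_map]
  rw [hc0, Complex.norm_real, Real.norm_eq_abs] at habs
  have : σ (p₁.coeff 0) = 1 ∨ σ (p₁.coeff 0) = -1 := abs_eq (by norm_num) |>.mp habs
  have h01 : p₁.coeff 0 = 1 ∨ p₁.coeff 0 = -1 := by
    rcases this with h | h
    · left; exact σ.injective (by rw [h, map_one])
    · right; exact σ.injective (by rw [h, map_neg, map_one])
  have : ‖(Complex.ofRealHom.comp σ₀) (p₁.coeff 0)‖ = 1 := by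
    rcases h01 with h | h <;> simp [h]
  rw [hconst, norm_mul, hw, one_mul] at this
  exact hμ this
end
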